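/- For even n and a divisor k of n, set Ψ_h(m) = M(n−2m)·n!·m!·2^m·C(n−kh−m−1, m−1)·C(n/k, h)²·(2k)^h·h! (so Ψ₀(m) = M(n−2m)·n!·m!·2^m·C(n−m−1, m−1)), where M(j) = (j−1)!! is the number of perfect matchings of j labelled points, and let J_n = {m ∈ ℤ : ⌈(1/3 − δ_n)n⌉ ≤ m ≤ ⌊(1/3 + δ_n)n⌋} with δ_n = (1/2)·(log n)^{−1/3}. Let n → ∞ through even integers and let k = k(n) be a divisor of n with k ≥ K₀(n), and set h* = ⌈n/(k·√(log k))⌉. Then Σ_{h=1}^{h*} Σ_{m ∈ J_n} Ψ_h(m) / Σ_{m ∈ J_n} Ψ₀(m) → 0. -/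

import Mathlib

/-- `K₀(n) = log₂(2n/e) / (1 − (1/2)·log₂ 3)`. -/
noncomputable def K0 (n : ℕ) : ℝ :=
  Real.logb 2 (2 * n / Real.exp 1) / (1 - Real.logb 2 3 / 2)

/-- `M(j) = (j−1)!!`, the number of perfect matchings of `j` labelled points
(with `M(0) = 1`). -/
def numMatchings (j : ℕ) : ℕ := Nat.doubleFactorial (j - 1)

/-- `Ψ_h(m) = M(n−2m)·n!·m!·2^m·C(n−kh−m−1, m−1)·C(n/k, h)²·(2k)^h·h!`
(so `Ψ₀(m) = M(n−2m)·n!·m!·2^m·C(n−m−1, m−1)`). -/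
noncomputable def PsiH (n k h m : ℕ) : ℝ :=
  (numMatchings (n - 2 * m) : ℝ) * (n.factorial : ℝ) * (m.factorial : ℝ) * 2 ^ m *
    ((n - k * h - m - 1).choose (m - 1) : ℝ) * ((n / k).choose h : ℝ) ^ 2 *
    (2 * (k : ℝ)) ^ h * (h.factorial : ℝ)

/-- `J_n = {m : ⌈(1/3 − δ_n)n⌉ ≤ m ≤ ⌊(1/3 + δ_n)n⌋}` with `δ_n = (1/2)(log n)^{−1/3}`. -/
noncomputable def Jn (n : ℕ) : Finset ℕ :=
  Finset.Icc ⌈((1 : ℝ) / 3 - (Real.log n) ^ (-(1 : ℝ) / 3) / 2) * n⌉₊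
             ⌊((1 : ℝ) / 3 + (Real.log n) ^ (-(1 : ℝ) / 3) / 2) * n⌋₊

/-- `h* = ⌈n/(k·√(log k))⌉`. -/
noncomputable def hstar (n k : ℕ) : ℕ :=
  ⌈(n : ℝ) / ((k : ℝ) * Real.sqrt (Real.log k))⌉₊

/-! ### Auxiliary lemmas -/

lemma aux_choose_pred_mul_le (A B r : ℕ) (hBA : B ≤ A) :
    (B - 1).choose r * A ≤ B.choose r * (A - r) := by
  rcases Nat.eq_zero_or_pos r with hr | hr
  · simp [hr]
  rcases Nat.eq_zero_or_pos B with hB | hB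
  · simp [hB, Nat.choose_eq_zero_of_lt hr]
  have key : (B - 1).choose r * B = B.choose r * (B - r) := by
    have h := Nat.choose_mul_succ_eq (B - 1) r
    have hB1 : B - 1 + 1 = B := by omega
    rw [hB1] at h
    exact h
  have hmul : (B - r) * A ≤ (A - r) * B := by
    calc (B - r) * A = B * A - r * A := by rw [Nat.sub_mul]
    _ ≤ A * B - r * B := by
        rw [Nat.mul_comm B A]
        exact Nat.sub_le_sub_left (Nat.mul_le_mul_left r hBA) _
    _ = (A - r) * B := by rw [Nat.sub_mul]
  have h2 : (B - 1).choose r * A * B ≤ B.choose r * (A - r) * B := by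
    calc (B - 1).choose r * A * B = (B - 1).choose r * B * A := by ring
    _ = B.choose r * (B - r) * A := by rw [key]
    _ = B.choose r * ((B - r) * A) := by ring
    _ ≤ B.choose r * ((A - r) * B) := Nat.mul_le_mul_left _ hmul
    _ = B.choose r * (A - r) * B := by ring
  exact Nat.le_of_mul_le_mul_right h2 hB

lemma aux_choose_sub_mul_pow_le (A r t : ℕ) :
    (A - t).choose r * A ^ t ≤ A.choose r * (A - r) ^ t := by
  induction t with
  | zero => simp
  | succ t ih =>
    have h1 : A - (t + 1) = (A - t) - 1 := by omega
    calc (A - (t+1)).choose r * A ^ (t+1)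
        = ((A - t) - 1).choose r * A * A ^ t := by rw [h1, pow_succ]; ring
      _ ≤ (A - t).choose r * (A - r) * A ^ t := by
          exact Nat.mul_le_mul_right _ (aux_choose_pred_mul_le A (A - t) r (Nat.sub_le _ _))
      _ = ((A - t).choose r * A ^ t) * (A - r) := by ring
      _ ≤ (A.choose r * (A - r) ^ t) * (A - r) := Nat.mul_le_mul_right _ ih
      _ = A.choose r * (A - r) ^ (t+1) := by rw [pow_succ]; ring

lemma aux_choose_sub_le_real {A r : ℕ} (t : ℕ) (hA : 0 < A) {q : ℝ}
    (hAr : ((A - r : ℕ) : ℝ) ≤ q * A) :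
    ((A - t).choose r : ℝ) ≤ q ^ t * (A.choose r) := by
  have h := aux_choose_sub_mul_pow_le A r t
  have hcast : ((A - t).choose r : ℝ) * (A : ℝ) ^ t ≤ (A.choose r : ℝ) * ((A - r : ℕ) : ℝ) ^ t := by
    exact_mod_cast h
  have h2 : ((A - r : ℕ) : ℝ) ^ t ≤ (q * A) ^ t :=
    pow_le_pow_left₀ (by positivity) hAr t
  have hApos : (0:ℝ) < (A:ℝ) ^ t := by positivity
  calc ((A - t).choose r : ℝ)
      ≤ (A.choose r : ℝ) * ((A - r : ℕ) : ℝ) ^ t / (A:ℝ) ^ t := by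
        rw [le_div_iff₀ hApos]; exact hcast
    _ ≤ (A.choose r : ℝ) * (q * A) ^ t / (A:ℝ) ^ t := by gcongr
    _ = q ^ t * (A.choose r) := by
        rw [mul_pow]
        field_simp

lemma aux_choose_sq_mul_factorial_le (a h : ℕ) :
    a.choose h ^ 2 * h.factorial ≤ a ^ (2 * h) := by
  calc a.choose h ^ 2 * h.factorial = a.choose h * (h.factorial * a.choose h) := by ring
    _ = a.choose h * a.descFactorial h := by rw [Nat.descFactorial_eq_factorial_mul_choose]
    _ ≤ a ^ h * a ^ h := Nat.mul_le_mul (Nat.choose_le_pow _ _) (Nat.descFactorial_le_pow _ _)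
    _ = a ^ (2 * h) := by rw [← pow_add]; ring_nf

lemma aux_psiH_nonneg (n k h m : ℕ) : 0 ≤ PsiH n k h m := by
  unfold PsiH; positivity

/-- The key pointwise bound: for suitable `m`, `Ψ_h(m) ≤ (2n³·q^k)^h·Ψ₀(m)`. -/
lemma aux_psiH_le (n k h m : ℕ) (hA : 0 < n - m - 1)
    (hq : ((n - m - 1 - (m - 1) : ℕ) : ℝ) ≤ (51/100 : ℝ) * ((n - m - 1 : ℕ) : ℝ))
    (hkn : k ≤ n) :
    PsiH n k h m ≤ (2 * (n:ℝ)^3 * (51/100 : ℝ)^k) ^ h * PsiH n k 0 m := by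
  set q : ℝ := 51/100 with hqdef
  have hsub : n - k * h - m - 1 = (n - m - 1) - k * h := by omega
  have hch : ((n - k*h - m - 1).choose (m-1) : ℝ) ≤ q ^ (k*h) * ((n - m - 1).choose (m-1)) := by
    rw [hsub]
    exact aux_choose_sub_le_real (k*h) hA hq
  have hR : (((n / k).choose h : ℝ)) ^ 2 * (2 * (k:ℝ)) ^ h * (h.factorial : ℝ)
      ≤ ((n:ℝ)^2) ^ h * (2 * (n:ℝ)) ^ h := by
    have h1 : (((n / k).choose h : ℝ)) ^ 2 * (h.factorial : ℝ) ≤ ((n:ℝ)^2) ^ h := by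
      have h0 := aux_choose_sq_mul_factorial_le (n / k) h
      have h2 : (n / k) ^ (2*h) ≤ n ^ (2*h) := Nat.pow_le_pow_left (Nat.div_le_self n k) _
      calc (((n / k).choose h : ℝ)) ^ 2 * (h.factorial : ℝ)
          ≤ ((n:ℝ)) ^ (2*h) := by exact_mod_cast h0.trans h2
        _ = ((n:ℝ)^2) ^ h := by rw [← pow_mul]
    have h2 : (2 * (k:ℝ)) ^ h ≤ (2 * (n:ℝ)) ^ h := by
      apply pow_le_pow_left₀ (by positivity)
      have : (k:ℝ) ≤ n := by exact_mod_cast hkn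
      linarith
    calc (((n / k).choose h : ℝ)) ^ 2 * (2 * (k:ℝ)) ^ h * (h.factorial : ℝ)
        = ((((n / k).choose h : ℝ)) ^ 2 * (h.factorial : ℝ)) * (2 * (k:ℝ)) ^ h := by ring
      _ ≤ ((n:ℝ)^2) ^ h * (2 * (n:ℝ)) ^ h := by
          apply mul_le_mul h1 h2 (by positivity) (by positivity)
  set C0 : ℝ := ((numMatchings (n - 2*m)) : ℝ) * (n.factorial : ℝ) * (m.factorial : ℝ) * 2 ^ m
    with hC0
  have hC0nn : 0 ≤ C0 := by rw [hC0]; positivity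
  have e0 : PsiH n k 0 m = C0 * ((n - m - 1).choose (m-1) : ℝ) := by
    simp [PsiH, hC0]
  have eh : PsiH n k h m = C0 * ((n - k*h - m - 1).choose (m-1) : ℝ) *
      ((((n / k).choose h : ℝ)) ^ 2 * (2 * (k:ℝ)) ^ h * (h.factorial : ℝ)) := by
    simp only [PsiH, hC0]; ring
  rw [eh, e0]
  calc C0 * ((n - k*h - m - 1).choose (m-1) : ℝ) *
      ((((n / k).choose h : ℝ)) ^ 2 * (2 * (k:ℝ)) ^ h * (h.factorial : ℝ))
      ≤ C0 * (q ^ (k*h) * ((n - m - 1).choose (m-1))) * (((n:ℝ)^2) ^ h * (2 * (n:ℝ)) ^ h) := by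
        apply mul_le_mul (mul_le_mul_of_nonneg_left hch hC0nn) hR (by positivity) (by positivity)
    _ = (2 * (n:ℝ)^3 * q^k) ^ h * (C0 * ((n - m - 1).choose (m-1) : ℝ)) := by
        rw [mul_pow, mul_pow, pow_mul, mul_pow, ← pow_mul q k h]
        ring

/-- Facts about members of `Jn n` for large `n`. -/
lemma aux_Jn_facts {n m : ℕ} (hn : 1000 ≤ n)
    (hδ : (Real.log n) ^ (-(1:ℝ)/3) ≤ 1/500) (hm : m ∈ Jn n) :
    1 ≤ m ∧ 2*m ≤ n ∧ 0 < n - m - 1 ∧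
      ((n - m - 1 - (m - 1) : ℕ) : ℝ) ≤ (51/100 : ℝ) * ((n - m - 1 : ℕ) : ℝ) := by
  have hnr : (1000:ℝ) ≤ (n:ℝ) := by exact_mod_cast hn
  set δ' : ℝ := (Real.log n) ^ (-(1:ℝ)/3) with hδ'
  have hδ'0 : 0 ≤ δ' := by
    rw [hδ']
    exact Real.rpow_nonneg (Real.log_natCast_nonneg n) _
  rw [Jn, Finset.mem_Icc] at hm
  have h1 : ((1:ℝ)/3 - δ'/2) * n ≤ m := Nat.ceil_le.mp hm.1
  have h2 : (m:ℝ) ≤ ((1:ℝ)/3 + δ'/2) * n := by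
    have := hm.2
    rw [Nat.le_floor_iff (by positivity)] at this
    exact this
  have hprod : δ' * n ≤ n / 500 := by
    have := mul_le_mul_of_nonneg_right hδ (by positivity : (0:ℝ) ≤ (n:ℝ))
    linarith
  have hprod0 : 0 ≤ δ' * n := by positivity
  have hm1 : 1 ≤ m := by
    have : (1:ℝ) ≤ (m:ℝ) := by nlinarith
    exact_mod_cast this
  have hm2 : 2*m ≤ n := by
    have : 2*(m:ℝ) ≤ (n:ℝ) := by nlinarith
    exact_mod_cast this
  have hm3 : m + 2 ≤ n := by
    have : (m:ℝ) + 2 ≤ (n:ℝ) := by nlinarith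
    exact_mod_cast this
  refine ⟨hm1, hm2, by omega, ?_⟩
  have e1 : n - m - 1 - (m - 1) = n - 2*m := by omega
  rw [e1]
  have e2 : ((n - 2*m : ℕ) : ℝ) = (n:ℝ) - 2*m := by
    rw [Nat.cast_sub hm2]; push_cast; ring
  have e3 : ((n - m - 1 : ℕ) : ℝ) = (n:ℝ) - m - 1 := by
    have h4 : n - m - 1 = n - (m + 1) := by omega
    rw [h4, Nat.cast_sub (by omega)]; push_cast; ring
  rw [e2, e3]
  linarith

section
open Filter Real

set_option maxHeartbeats 1000000 in
/-- As `n → ∞` through even integers, with `k = k(n)` a divisor of `n` satisfying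
`k ≥ K₀(n)`: `Σ_{h=1}^{h*} Σ_{m ∈ J_n} Ψ_h(m) / Σ_{m ∈ J_n} Ψ₀(m) → 0`. -/
theorem stmt16 (N k : ℕ → ℕ) (hNeven : ∀ i, Even (N i)) (hNpos : ∀ i, 0 < N i)
    (hN : Filter.Tendsto N Filter.atTop Filter.atTop)
    (hdvd : ∀ i, k i ∣ N i) (hK : ∀ i, K0 (N i) ≤ (k i : ℝ)) :
    Filter.Tendsto
      (fun i =>
        (∑ h ∈ Finset.Icc 1 (hstar (N i) (k i)), ∑ m ∈ Jn (N i), PsiH (N i) (k i) h m) /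
          ∑ m ∈ Jn (N i), PsiH (N i) (k i) 0 m)
      Filter.atTop (nhds 0) := by
  classical
  set q : ℝ := 51/100 with hqdef
  set c : ℝ := 1 - Real.logb 2 3 / 2 with hcdef
  have hc : 0 < c := by
    have h4 : Real.logb 2 3 < Real.logb 2 4 :=
      Real.logb_lt_logb (by norm_num) (by norm_num) (by norm_num)
    have h42 : Real.logb 2 4 = 2 := by
      rw [show (4:ℝ) = 2^(2:ℕ) by norm_num, Real.logb_pow,
        Real.logb_self_eq_one (by norm_num)]
      norm_num
    rw [hcdef]; rw [h42] at h4; linarith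
  have hlog2 : 0 < Real.log 2 := Real.log_pos (by norm_num)
  have hD : 0 < Real.log 2 * c := mul_pos hlog2 hc
  set α : ℝ := -Real.log q / (Real.log 2 * c) with hαdef
  have hα4 : 4 < α := by
    have hlq : -Real.log q = Real.log (100/51) := by
      rw [hqdef, ← Real.log_inv]; norm_num
    have hlc : Real.log 2 * c = Real.log 2 - Real.log 3 / 2 := by
      rw [hcdef, Real.logb]
      field_simp
    have h169 : Real.log (16/9) = 4*Real.log 2 - 2*Real.log 3 := by
      rw [Real.log_div (by norm_num) (by norm_num), show (16:ℝ)=2^(4:ℕ) by norm_num,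
        show (9:ℝ)=3^(2:ℕ) by norm_num, Real.log_pow, Real.log_pow]
      push_cast; ring
    have hlt : Real.log (16/9) < Real.log (100/51) :=
      Real.log_lt_log (by norm_num) (by norm_num)
    rw [hαdef, lt_div_iff₀ hD, hlq, hlc]
    linarith
  -- the dominating sequence
  set g : ℕ → ℝ := fun i => 2 * (N i : ℝ)^4 * (2 * (N i : ℝ) / Real.exp 1) ^ (-α) with hgdef
  have hgt : Filter.Tendsto g Filter.atTop (nhds 0) := by
    have h1 : Filter.Tendsto (fun x:ℝ => (2*(2/Real.exp 1)^(-α)) * x^(-(α-4)))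
        Filter.atTop (nhds 0) := by
      have h0 := tendsto_rpow_neg_atTop (by linarith : (0:ℝ) < α - 4)
      simpa using h0.const_mul (2*(2/Real.exp 1)^(-α))
    have h2 : Filter.Tendsto (fun x:ℝ => 2*x^4*(2*x/Real.exp 1)^(-α))
        Filter.atTop (nhds 0) := by
      apply h1.congr'
      filter_upwards [eventually_gt_atTop (0:ℝ)] with x hx
      rw [show 2*x/Real.exp 1 = (2/Real.exp 1)*x by ring,
        Real.mul_rpow (by positivity) hx.le]
      rw [show (x:ℝ)^4 = x^((4:ℕ):ℝ) from (Real.rpow_natCast x 4).symm]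
      rw [show (-(α-4)) = ((4:ℕ):ℝ) + (-α) by push_cast; ring, Real.rpow_add hx]
      ring
    exact h2.comp (tendsto_natCast_atTop_atTop.comp hN)
  -- eventual hypotheses
  have hev1 : ∀ᶠ i in Filter.atTop, 1000 ≤ N i := hN.eventually (eventually_ge_atTop 1000)
  have hδt : Filter.Tendsto (fun i => (Real.log (N i)) ^ (-(1:ℝ)/3))
      Filter.atTop (nhds 0) := by
    have h0 : Filter.Tendsto (fun x:ℝ => x ^ (-(1:ℝ)/3)) Filter.atTop (nhds 0) := by
      have := tendsto_rpow_neg_atTop (by norm_num : (0:ℝ) < 1/3)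
      simpa [neg_div] using this
    exact h0.comp (Real.tendsto_log_atTop.comp (tendsto_natCast_atTop_atTop.comp hN))
  have hev2 : ∀ᶠ i in Filter.atTop, (Real.log (N i)) ^ (-(1:ℝ)/3) ≤ 1/500 :=
    hδt.eventually_le_const (by norm_num)
  have hK0t : Filter.Tendsto (fun i => K0 (N i)) Filter.atTop Filter.atTop := by
    have hinner : Filter.Tendsto (fun i => 2 * ((N i : ℕ):ℝ) / Real.exp 1)
        Filter.atTop Filter.atTop :=
      ((tendsto_natCast_atTop_atTop.comp hN).const_mul_atTop
        (by norm_num : (0:ℝ) < 2)).atTop_div_const (Real.exp_pos 1)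
    have := ((Real.tendsto_logb_atTop (by norm_num : (1:ℝ) < 2)).comp hinner).atTop_div_const hc
    exact this.congr (fun i => rfl)
  have hev3 : ∀ᶠ i in Filter.atTop, (2:ℝ) ≤ K0 (N i) := hK0t.eventually_ge_atTop 2
  have hev4 : ∀ᶠ i in Filter.atTop, g i ≤ 1 :=
    hgt.eventually_le_const (by norm_num : (0:ℝ) < 1)
  -- the main eventual upper bound
  have hub : ∀ᶠ i in Filter.atTop,
      (∑ h ∈ Finset.Icc 1 (hstar (N i) (k i)), ∑ m ∈ Jn (N i), PsiH (N i) (k i) h m) /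
          (∑ m ∈ Jn (N i), PsiH (N i) (k i) 0 m) ≤ g i := by
    filter_upwards [hev1, hev2, hev3, hev4] with i h1 h2 h3 h4
    set n := N i with hn
    set kk := k i with hkk
    set nr : ℝ := (n:ℝ) with hnr
    have hnr1000 : (1000:ℝ) ≤ nr := by rw [hnr]; exact_mod_cast h1
    have hnr1 : (1:ℝ) ≤ nr := by linarith
    have hkkn : kk ≤ n := Nat.le_of_dvd (hNpos i) (hdvd i)
    have hkk2 : 2 ≤ kk := by
      have : (2:ℝ) ≤ (kk:ℝ) := le_trans h3 (hK i)
      exact_mod_cast this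
    -- the bound q^kk ≤ (2n/e)^(-α)
    have hQB : q ^ kk ≤ (2*nr/Real.exp 1) ^ (-α) := by
      have step1 : q ^ ((kk:ℕ):ℝ) ≤ q ^ (K0 n) :=
        Real.rpow_le_rpow_of_exponent_ge (by norm_num [hqdef]) (by norm_num [hqdef]) (hK i)
      have step2 : q ^ (K0 n) = (2*nr/Real.exp 1) ^ (-α) := by
        have hx : (0:ℝ) < 2*nr/Real.exp 1 := by positivity
        rw [Real.rpow_def_of_pos (by norm_num [hqdef] : (0:ℝ) < q), Real.rpow_def_of_pos hx]
        congr 1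
        have hcne : (1 - Real.log 3 / Real.log 2 / 2) ≠ 0 := by
          have h5 := hc
          rw [hcdef, Real.logb] at h5
          exact h5.ne'
        simp only [K0, Real.logb, hαdef]
        rw [hnr, hcdef, Real.logb]
        field_simp
      calc q ^ kk = q ^ ((kk:ℕ):ℝ) := (Real.rpow_natCast q kk).symm
        _ ≤ q ^ (K0 n) := step1
        _ = (2*nr/Real.exp 1) ^ (-α) := step2
    set X : ℝ := 2 * nr^3 * q ^ kk with hXdef
    have hX0 : 0 ≤ X := by rw [hXdef]; positivity
    have hXg : nr * X ≤ g i := by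
      have he : nr * X = 2 * nr^4 * (q^kk) := by rw [hXdef]; ring
      have hgi : g i = 2 * nr^4 * ((2*nr/Real.exp 1)^(-α)) := by
        simp only [hgdef]; rfl
      rw [he, hgi]
      exact mul_le_mul_of_nonneg_left hQB (by positivity)
    have hX1 : X ≤ 1 := by
      have : X ≤ nr * X := le_mul_of_one_le_left hX0 hnr1
      linarith [hXg, h4]
    -- hstar ≤ n
    have hH : hstar n kk ≤ n := by
      rw [hstar]
      apply Nat.ceil_le.mpr
      have hk2r : (2:ℝ) ≤ (kk:ℝ) := by exact_mod_cast hkk2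
      have hlogk : (1:ℝ)/2 ≤ Real.log kk := by
        have hl2 : Real.log 2 ≤ Real.log kk := Real.log_le_log (by norm_num) hk2r
        have := Real.log_two_gt_d9
        linarith
      have hsq : (1:ℝ)/2 ≤ Real.sqrt (Real.log kk) := by
        have h0 : Real.sqrt (1/4) ≤ Real.sqrt (Real.log kk) :=
          Real.sqrt_le_sqrt (by linarith)
        rwa [show (1:ℝ)/4 = (1/2)^2 by norm_num, Real.sqrt_sq (by norm_num)] at h0
      have hden : 1 ≤ (kk:ℝ) * Real.sqrt (Real.log kk) := by nlinarith
      exact (div_le_self (by positivity) hden)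
    -- facts about members of Jn
    have hfacts : ∀ m ∈ Jn n, 1 ≤ m ∧ 2*m ≤ n ∧ 0 < n - m - 1 ∧
        ((n - m - 1 - (m - 1) : ℕ) : ℝ) ≤ (51/100 : ℝ) * ((n - m - 1 : ℕ) : ℝ) :=
      fun m hm => aux_Jn_facts h1 h2 hm
    -- Jn is nonempty and the denominator is positive
    set δ' : ℝ := (Real.log nr) ^ (-(1:ℝ)/3) with hδ'def
    have hLpos : 0 < Real.log nr := Real.log_pos (by linarith)
    have hδ'0 : 0 ≤ δ' := by rw [hδ'def]; positivity
    have hδn1 : 1 ≤ δ' * nr := by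
      have hL3 : Real.log nr ≤ nr^(3:ℕ) := by
        have h8 := Real.log_le_sub_one_of_pos (by linarith : (0:ℝ) < nr)
        have h9 : (1:ℝ) ≤ nr^2 := by nlinarith
        have h10 : nr * 1 ≤ nr * nr^2 :=
          mul_le_mul_of_nonneg_left h9 (by linarith)
        have h11 : nr * nr^2 = nr^3 := by ring
        linarith
      have hcb : (Real.log nr)^((1:ℝ)/3) ≤ (nr^(3:ℕ))^((1:ℝ)/3) :=
        Real.rpow_le_rpow hLpos.le hL3 (by norm_num)
      have hcb2 : ((nr:ℝ)^(3:ℕ))^((1:ℝ)/3) = nr := by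
        rw [← Real.rpow_natCast nr 3, ← Real.rpow_mul (by positivity)]
        norm_num
      have hpow : (Real.log nr)^((1:ℝ)/3) ≤ nr := by rw [hcb2] at hcb; exact hcb
      have hppos : 0 < (Real.log nr)^((1:ℝ)/3) := Real.rpow_pos_of_pos hLpos _
      have hδeq : δ' = ((Real.log nr)^((1:ℝ)/3))⁻¹ := by
        rw [hδ'def, show (-(1:ℝ)/3) = -((1:ℝ)/3) by norm_num, Real.rpow_neg hLpos.le]
      rw [hδeq, inv_mul_eq_div, le_div_iff₀ hppos, one_mul]
      exact hpow
    set m₁ := ⌈((1:ℝ)/3 - δ'/2) * nr⌉₊ with hm₁def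
    have hm₁mem : m₁ ∈ Jn n := by
      rw [Jn, Finset.mem_Icc]
      constructor
      · exact le_refl _
      · apply Nat.le_floor
        have ha0 : (0:ℝ) ≤ ((1:ℝ)/3 - δ'/2) * nr := by
          have h5 : δ' ≤ 1/500 := h2
          apply mul_nonneg (by linarith) (by linarith)
        have := Nat.ceil_lt_add_one ha0
        have hgap : ((1:ℝ)/3 - δ'/2) * nr + 1 ≤ ((1:ℝ)/3 + δ'/2) * nr := by
          have expand : ((1:ℝ)/3 + δ'/2) * nr - ((1:ℝ)/3 - δ'/2) * nr = δ' * nr := by ring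
          linarith [hδn1]
        have hfin : ((m₁:ℝ)) < ((1:ℝ)/3 + δ'/2) * nr := lt_of_lt_of_le this hgap
        exact hfin.le
    obtain ⟨hm1le, hm2le, hApos, _⟩ := hfacts m₁ hm₁mem
    have hψpos : 0 < PsiH n kk 0 m₁ := by
      have hM : 0 < numMatchings (n - 2*m₁) := Nat.doubleFactorial_pos _
      have hch : 0 < (n - kk*0 - m₁ - 1).choose (m₁ - 1) := by
        apply Nat.choose_pos
        omega
      simp only [PsiH]
      have c1 : (0:ℝ) < (numMatchings (n-2*m₁):ℝ) := by exact_mod_cast hM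
      have c2 : (0:ℝ) < ((n - kk*0 - m₁ - 1).choose (m₁-1):ℝ) := by exact_mod_cast hch
      have c3 : (0:ℝ) < (n.factorial:ℝ) := by exact_mod_cast n.factorial_pos
      have c4 : (0:ℝ) < (m₁.factorial:ℝ) := by exact_mod_cast m₁.factorial_pos
      have c5 : (0:ℝ) < ((n/kk).choose 0:ℝ)^2 := by
        simp [Nat.choose_zero_right]
      have c6 : (0:ℝ) < (2*(kk:ℝ))^0 := by norm_num
      have c7 : (0:ℝ) < ((Nat.factorial 0 : ℕ):ℝ) := by norm_num [Nat.factorial]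
      exact mul_pos (mul_pos (mul_pos (mul_pos (mul_pos (mul_pos (mul_pos c1 c3) c4)
        (by positivity : (0:ℝ) < (2:ℝ)^m₁)) c2) c5) c6) c7
    have hDpos : 0 < ∑ m ∈ Jn n, PsiH n kk 0 m :=
      Finset.sum_pos' (fun m _ => aux_psiH_nonneg n kk 0 m) ⟨m₁, hm₁mem, hψpos⟩
    -- the numerator bound
    set D : ℝ := ∑ m ∈ Jn n, PsiH n kk 0 m with hDdef
    have hNum : (∑ h ∈ Finset.Icc 1 (hstar n kk), ∑ m ∈ Jn n, PsiH n kk h m)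
        ≤ ((hstar n kk : ℝ)) * (X * D) := by
      calc (∑ h ∈ Finset.Icc 1 (hstar n kk), ∑ m ∈ Jn n, PsiH n kk h m)
          ≤ ∑ h ∈ Finset.Icc 1 (hstar n kk), X^h * D := by
            apply Finset.sum_le_sum
            intro h hh
            calc (∑ m ∈ Jn n, PsiH n kk h m) ≤ ∑ m ∈ Jn n, X^h * PsiH n kk 0 m := by
                  apply Finset.sum_le_sum
                  intro m hm
                  obtain ⟨_, _, hA, hq⟩ := hfacts m hm
                  exact aux_psiH_le n kk h m hA hq hkkn
              _ = X^h * D := by rw [hDdef, Finset.mul_sum]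
        _ ≤ ∑ h ∈ Finset.Icc 1 (hstar n kk), X * D := by
            apply Finset.sum_le_sum
            intro h hh
            have h1h : 1 ≤ h := (Finset.mem_Icc.mp hh).1
            have : X^h ≤ X^1 := pow_le_pow_of_le_one hX0 hX1 h1h
            rw [pow_one] at this
            exact mul_le_mul_of_nonneg_right this hDpos.le
        _ = ((hstar n kk : ℝ)) * (X * D) := by
            rw [Finset.sum_const, Nat.card_Icc]
            simp [nsmul_eq_mul]
    have hHr : ((hstar n kk : ℝ)) ≤ nr := by rw [hnr]; exact_mod_cast hH
    rw [div_le_iff₀ hDpos]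
    calc (∑ h ∈ Finset.Icc 1 (hstar n kk), ∑ m ∈ Jn n, PsiH n kk h m)
        ≤ ((hstar n kk : ℝ)) * (X * D) := hNum
      _ ≤ nr * (X * D) := mul_le_mul_of_nonneg_right hHr (mul_nonneg hX0 hDpos.le)
      _ = (nr * X) * D := by ring
      _ ≤ g i * D := mul_le_mul_of_nonneg_right hXg hDpos.le
  have hlb : ∀ᶠ i in Filter.atTop, 0 ≤
      (∑ h ∈ Finset.Icc 1 (hstar (N i) (k i)), ∑ m ∈ Jn (N i), PsiH (N i) (k i) h m) /
        (∑ m ∈ Jn (N i), PsiH (N i) (k i) 0 m) := by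
    apply Filter.Eventually.of_forall
    intro i
    apply div_nonneg
    · exact Finset.sum_nonneg fun h _ => Finset.sum_nonneg fun m _ => aux_psiH_nonneg _ _ _ _
    · exact Finset.sum_nonneg fun m _ => aux_psiH_nonneg _ _ _ _
  exact squeeze_zero' hlb hub hgt
end
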